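/- Let A be a ring, I a finitely generated ideal, and (M_x)_{x∈S} a family of A-modules. Then the I-adic completion of the product ∏_x M_x embeds naturally into the product of the I-adic completions ∏_x M_x^. -/

import Mathlib

open Submodule

lemma pi_le_span_smul_top {A : Type*} [CommRing A] {S : Type*} (M : S → Type*)
    [∀ x, AddCommGroup (M x)] [∀ x, Module A (M x)] (s : Finset A) :
    Submodule.pi Set.univ (fun x => Ideal.span (s : Set A) • (⊤ : Submodule A (M x))) ≤
      Ideal.span (s : Set A) • (⊤ : Submodule A (∀ x, M x)) := by
  classical
  induction s using Finset.induction with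
  | empty =>
      intro m hm
      have hz : ∀ x, m x = 0 := fun x => by
        simpa [Ideal.span_empty] using hm x trivial
      have : m = 0 := funext hz
      simp [this]
  | @insert a s ha ih =>
      intro m hm
      have h1 : ∀ x, m x ∈ Ideal.span {a} • (⊤ : Submodule A (M x)) ⊔
          Ideal.span (s : Set A) • (⊤ : Submodule A (M x)) := by
        intro x
        have hsp : Ideal.span (↑(insert a s) : Set A) =
            Ideal.span {a} ⊔ Ideal.span (s : Set A) := by
          rw [Finset.coe_insert, ← Set.singleton_union, Ideal.span_union]
        simpa only [hsp, Submodule.sup_smul, SetLike.mem_coe] using hm x trivial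
      choose y hy z hz hyz using fun x => Submodule.mem_sup.mp (h1 x)
      have hy' : ∀ x, ∃ w : M x, a • w = y x := by
        intro x
        have := hy x
        rw [Submodule.ideal_span_singleton_smul, ← SetLike.mem_coe,
          Submodule.coe_pointwise_smul] at this
        obtain ⟨w, -, hw⟩ := Set.mem_smul_set.mp this
        exact ⟨w, hw⟩
      choose w hw using hy'
      have hmw : m = a • w + z := by
        funext x
        simp [Pi.smul_apply, hw, hyz]
      rw [hmw]
      refine Submodule.add_mem _ ?_ ?_
      · refine Submodule.smul_mem_smul ?_ Submodule.mem_top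
        exact Ideal.subset_span (by simp)
      · refine Submodule.smul_mono ?_ le_rfl (ih (fun x _ => hz x))
        exact Ideal.span_mono (by rw [Finset.coe_insert]; exact Set.subset_insert _ _)

/-- Let `A` be a ring, `I` a finitely generated ideal and `(M x)_{x ∈ S}` a family of
`A`-modules. Then the `I`-adic completion of the product `∏ x, M x` embeds naturally into the
product of the `I`-adic completions `∏ x, (M x)^`, via the map whose `x`-component is the
completion of the projection `∏ y, M y → M x`. -/
theorem adicCompletion_pi_injective {A : Type*} [CommRing A] (I : Ideal A) (hI : I.FG)
    {S : Type*} (M : S → Type*) [∀ x, AddCommGroup (M x)] [∀ x, Module A (M x)] :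
    Function.Injective
      (LinearMap.pi (fun x =>
        (AdicCompletion.map I (LinearMap.proj x : (∀ y, M y) →ₗ[A] M x)).restrictScalars A) :
        AdicCompletion I (∀ y, M y) →ₗ[A] ∀ x, AdicCompletion I (M x)) := by
  rw [← LinearMap.ker_eq_bot, Submodule.eq_bot_iff]
  intro a ha
  rw [LinearMap.mem_ker] at ha
  ext n
  obtain ⟨m, hm⟩ := Submodule.Quotient.mk_surjective _ (a.val n)
  have key : ∀ x, m x ∈ (I ^ n • ⊤ : Submodule A (M x)) := by
    intro x
    have h1 : (AdicCompletion.map I (LinearMap.proj x : (∀ y, M y) →ₗ[A] M x)) a = 0 := by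
      have := congrFun ha x
      simpa using this
    have h2 := congrArg (fun b => AdicCompletion.eval I (M x) n b) h1
    simp only [AdicCompletion.eval_apply, AdicCompletion.map_val_apply, ← hm,
      AdicCompletion.val_zero] at h2
    rw [LinearMap.reduceModIdeal_apply] at h2
    simpa [Submodule.Quotient.mk_eq_zero] using h2
  obtain ⟨s, hs⟩ := Submodule.FG.pow hI n
  have hmem : m ∈ (I ^ n • ⊤ : Submodule A (∀ y, M y)) := by
    rw [← hs]
    exact pi_le_span_smul_top M s (fun x _ => by show m x ∈ Ideal.span (↑s : Set A) • (⊤ : Submodule A (M x)); rw [Ideal.span, hs]; exact key x)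
  show a.val n = 0
  rw [← hm, Submodule.Quotient.mk_eq_zero]
  exact hmem
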